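/- Let 2 ≤ k ≤ 2^{√n}, p ≤ p_* := n^{-2} k^{-2√n+1}, and D := ⌊2√n⌋ − 2. Then Σ_{(ℓ,i,j,d) ∈ I_{G,D}^{(2)}} f(ℓ,i,j,d) → 0 as n → ∞, uniformly over all such k and p, where I_{G,D}^{(2)} := {(ℓ,i,j,d) ∈ I_{G,D} : ℓ > 3√n} and f(ℓ,i,j,d) := U_{G,D}(ℓ,i,j,d) · Φ(i) · Φ(j). -/

import Mathlib

open scoped Classical

section Defs

variable {V : Type*}

/-- One round of 2-neighbour bootstrap percolation: a healthy vertex becomes infected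
if it has at least two infected neighbours. -/
def bootStep (G : SimpleGraph V) (A : Set V) : Set V :=
  A ∪ {v | ∃ u w, u ≠ w ∧ G.Adj v u ∧ G.Adj v w ∧ u ∈ A ∧ w ∈ A}

/-- Iterates of the bootstrap process. -/
def bootIter (G : SimpleGraph V) (A : Set V) : ℕ → Set V
  | 0 => A
  | j + 1 => bootStep G (bootIter G A j)

/-- The 2-neighbour bootstrap closure `[A]` of a set `A` of initially infected vertices. -/
def bootClosure (G : SimpleGraph V) (A : Set V) : Set V :=
  ⋃ j, bootIter G A j

/-- Graph distance between two sets of vertices. -/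
noncomputable def setDist (G : SimpleGraph V) (X Y : Set V) : ℕ :=
  sInf {d | ∃ u ∈ X, ∃ v ∈ Y, G.dist u v = d}

/-- A sequence of `m` vertices `v 0, …, v (m-1)` (a "sequentially spanning sequence of
length `m-1`") is sequentially spanning if each vertex lies at distance exactly two from the
bootstrap closure of its predecessors. -/
def SeqSpanSeq (G : SimpleGraph V) (m : ℕ) (v : Fin m → V) : Prop :=
  ∀ i : Fin m, 0 < (i : ℕ) →
    setDist G (bootClosure G (v '' {j | (j : ℕ) < (i : ℕ)})) {v i} = 2

/-- A set `U` is sequentially spanning if its vertices admit an ordering which is a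
sequentially spanning sequence. -/
def SeqSpanSet (G : SimpleGraph V) (U : Set V) : Prop :=
  ∃ (m : ℕ) (v : Fin (m + 1) → V), Function.Injective v ∧ Set.range v = U ∧
    SeqSpanSeq G (m + 1) v

/-- A family `F` of vertex sets is disjointly internally spanned by `A` if there are
pairwise disjoint subsets of `A` internally spanning each member of `F`. -/
def DisjIntSpanned (G : SimpleGraph V) (A : Set V) (F : Set (Set V)) : Prop :=
  ∃ B : Set V → Set V,
    (∀ U ∈ F, B U ⊆ A ∧ bootClosure G (B U ∩ U) = U) ∧
    (∀ U ∈ F, ∀ W ∈ F, U ≠ W → Disjoint (B U) (B W))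

/-- The probability that the `p`-random subset of a finite vertex set satisfies the event `E`. -/
noncomputable def probEvent [Fintype V] [DecidableEq V] (p : ℝ) (E : Set V → Prop) : ℝ :=
  ∑ A : Finset V, if E ↑A then p ^ A.card * (1 - p) ^ (Fintype.card V - A.card) else 0

end Defs

/-- The `n`-dimensional Hamming graph on `[k]^n`: two vertices are adjacent iff they
differ in exactly one coordinate. -/
def hamming (n k : ℕ) : SimpleGraph (Fin n → Fin k) where
  Adj v w := (Finset.univ.filter fun i => v i ≠ w i).card = 1
  symm := by
    constructor
    intro v w h
    have e : (Finset.univ.filter fun i => w i ≠ v i) =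
        Finset.univ.filter fun i => v i ≠ w i :=
      Finset.filter_congr fun i _ => ne_comm
    rw [e]; exact h
  loopless := by
    constructor
    intro v h
    simp at h

/-- The vertex set of the projection of the Hamming graph specified by `S`:
coordinates with `S i = some a` are fixed to `a`, coordinates with `S i = none` are free. -/
def projSet {n k : ℕ} (S : Fin n → Option (Fin k)) : Set (Fin n → Fin k) :=
  {v | ∀ i : Fin n, ∀ a : Fin k, S i = some a → v i = a}

/-- The dimension of a projection: the number of free coordinates. -/
def projDim {n k : ℕ} (S : Fin n → Option (Fin k)) : ℕ :=
  (Finset.univ.filter fun i => S i = none).card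

/-- Probability that the Hamming graph percolates from the `p`-random subset. -/
noncomputable def percProb (n k : ℕ) (p : ℝ) : ℝ :=
  probEvent p (fun A => bootClosure (hamming n k) A = Set.univ)

/-- Probability that the projection `S` is internally spanned by the `p`-random subset. -/
noncomputable def intSpanProb (n k : ℕ) (p : ℝ) (S : Fin n → Option (Fin k)) : ℝ :=
  probEvent p (fun A => bootClosure (hamming n k) (A ∩ projSet S) = projSet S)

/-- `p_* = n^{-2} k^{-2√n + 1}`. -/
noncomputable def pStar (n k : ℕ) : ℝ :=
  (n : ℝ) ^ (-2 : ℝ) * (k : ℝ) ^ (-2 * Real.sqrt n + 1)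

/-- The critical probability for 2-neighbour bootstrap percolation on the Hamming graph. -/
noncomputable def pc (n k : ℕ) : ℝ :=
  sInf {p : ℝ | 0 < p ∧ p < 1 ∧ 1 / 2 ≤ percProb n k p}

/-- A canonical projection of dimension `m` (the first `m` coordinates are free,
the remaining ones are fixed to `x`). -/
def canonProj (n k m : ℕ) (x : Fin k) : Fin n → Option (Fin k) :=
  fun i => if (i : ℕ) < m then none else some x

/-- The set `I_{H,t}` of admissible indices `(ℓ, i, j, d)` for a projection of dimension `m`
and threshold `t`. -/
def indexSet (m t : ℕ) : Finset (ℕ × ℕ × ℕ × ℕ) :=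
  ((Finset.range (m + 1)) ×ˢ (Finset.range (m + 1)) ×ˢ (Finset.range (m + 1)) ×ˢ
      (Finset.range 3)).filter
    fun q => t ≤ q.1 ∧ q.1 ≤ min (q.2.1 + q.2.2.1 + q.2.2.2) m ∧
      q.2.2.1 ≤ q.2.1 ∧ q.2.1 < t ∧ q.2.1 + q.2.2.2 < q.1

/-- `U_{H,t}(ℓ,i,j,d)`: the number of candidate quadruples `(H_ℓ, {H_i, H_j}, d)` inside the
projection `SH` at threshold `t` with dimensions `ℓ, i, j` and distance `d`; the pair
`{H_i, H_j}` is unordered. -/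
noncomputable def candCountIn (n k : ℕ) (SH : Fin n → Option (Fin k)) (t : ℕ)
    (q : ℕ × ℕ × ℕ × ℕ) : ℕ :=
  Nat.card {c : (Fin n → Option (Fin k)) × Sym2 (Fin n → Option (Fin k)) //
    t ≤ q.1 ∧ q.2.2.1 ≤ q.2.1 ∧ q.2.1 < t ∧ q.2.2.2 ≤ 2 ∧
    projDim c.1 = q.1 ∧ projSet c.1 ⊆ projSet SH ∧
    ∃ a b, c.2 = s(a, b) ∧ projDim a = q.2.1 ∧ projDim b = q.2.2.1 ∧
      setDist (hamming n k) (projSet a) (projSet b) = q.2.2.2 ∧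
      bootClosure (hamming n k) (projSet a ∪ projSet b) = projSet c.1}

/-- `U_{G,t}(ℓ,i,j,d)`: the number of candidate quadruples in the whole Hamming graph. -/
noncomputable def candCount (n k t : ℕ) (q : ℕ × ℕ × ℕ × ℕ) : ℕ :=
  candCountIn n k (fun _ => none) t q

/-- The constants `Ψ_m`. -/
noncomputable def Psi (n k : ℕ) : ℕ → ℝ
  | 0 => 1
  | m + 1 =>
    if m + 1 ≤ 14 then (1 / 2) * (9 * Real.sqrt 2 / 10) ^ (m + 1)
    else Psi n k m * (1 + (k : ℝ) ^ (-(((m : ℝ) + 1) - 11) / 2)) * (1 + 4 / (n : ℝ))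

/-- The function `Φ(m) = Ψ_m p^{m/2+1} m! 2^{-m/2} (k-1)^m k^{(m²+2m)/4}`. -/
noncomputable def Phi (n k : ℕ) (p : ℝ) (m : ℕ) : ℝ :=
  Psi n k m * p ^ ((m : ℝ) / 2 + 1) * (Nat.factorial m : ℝ) * (2 : ℝ) ^ (-(m : ℝ) / 2) *
    ((k : ℝ) - 1) ^ m * (k : ℝ) ^ (((m : ℝ) ^ 2 + 2 * (m : ℝ)) / 4)

/-- `|S_{m-1}|`: the number of sequentially spanning sequences with `m` vertices
(i.e. of length `m - 1`) in the Hamming graph. -/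
noncomputable def seqCount (n k m : ℕ) : ℕ :=
  Nat.card {v : Fin m → (Fin n → Fin k) // SeqSpanSeq (hamming n k) m v}

/-- `|P_{ℓ,i}|`: the number of unordered pairs of sequentially spanning sequences of
length `ℓ` whose vertex sets intersect in exactly `i` vertices. -/
noncomputable def pairCount (n k ℓ i : ℕ) : ℕ :=
  Nat.card {q : Sym2 (Fin (ℓ + 1) → (Fin n → Fin k)) //
    ∃ a b, q = s(a, b) ∧ SeqSpanSeq (hamming n k) (ℓ + 1) a ∧
      SeqSpanSeq (hamming n k) (ℓ + 1) b ∧ (Set.range a ∩ Set.range b).ncard = i}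


section Count
variable {n k : ℕ}

/-- mask of a projection to the free coordinates of S -/
def maskP (S a : Fin n → Option (Fin k)) : Fin n → Option (Fin k) :=
  fun i => if S i = none then a i else none

lemma projSet_getD (hk : 2 ≤ k) (a : Fin n → Option (Fin k)) :
    (fun i => (a i).getD ⟨0, by omega⟩) ∈ projSet a := by
  intro i x hx; simp [hx]

lemma fixed_of_subset (hk : 2 ≤ k) {a S : Fin n → Option (Fin k)}
    (h : projSet a ⊆ projSet S) {i : Fin n} {x : Fin k} (hx : S i = some x) :
    a i = some x := by
  have hv := projSet_getD hk a
  set v : Fin n → Fin k := fun i => (a i).getD ⟨0, by omega⟩ with hvdef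
  cases ha : a i with
  | some y =>
    have := h hv i x hx
    simp [hvdef, ha] at this
    exact congrArg some this
  | none =>
    exfalso
    haveI : Nontrivial (Fin k) := Fin.nontrivial_iff_two_le.mpr hk
    obtain ⟨z, hz⟩ : ∃ z : Fin k, z ≠ x := exists_ne x
    have hv' : Function.update v i z ∈ projSet a := by
      intro j y hy
      rcases eq_or_ne j i with rfl | hne
      · rw [ha] at hy; exact absurd hy (by simp)
      · rw [Function.update_of_ne hne]; exact hv j y hy
    have := h hv' i x hx
    simp [Function.update_self] at this
    exact hz this

lemma unmask (hk : 2 ≤ k) {a a' S : Fin n → Option (Fin k)}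
    (ha : projSet a ⊆ projSet S) (ha' : projSet a' ⊆ projSet S)
    (hm : maskP S a = maskP S a') : a = a' := by
  funext i
  cases hS : S i with
  | none =>
    have := congrFun hm i
    simpa [maskP, hS] using this
  | some x =>
    rw [fixed_of_subset hk ha hS, fixed_of_subset hk ha' hS]

lemma subset_bootClosure (G : SimpleGraph (Fin n → Fin k)) (A : Set (Fin n → Fin k)) :
    A ⊆ bootClosure G A :=
  Set.subset_iUnion (bootIter G A) 0


lemma card_dim_le (hk : 2 ≤ k) (ℓ : ℕ) :
    Nat.card {S : Fin n → Option (Fin k) // projDim S = ℓ} ≤ n.choose ℓ * k ^ n := by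
  have hinj : Function.Injective
      (fun S : {S : Fin n → Option (Fin k) // projDim S = ℓ} =>
        ((⟨Finset.univ.filter (fun i => S.1 i = none), S.2⟩ : {T : Finset (Fin n) // T.card = ℓ}),
          (fun i => (S.1 i).getD ⟨0, by omega⟩ : Fin n → Fin k))) := by
    intro S S' h
    obtain ⟨h1, h2⟩ := Prod.mk.injEq .. ▸ h
    apply Subtype.ext; funext i
    have hmem : (S.1 i = none) ↔ (S'.1 i = none) := by
      have := congrArg (fun T => i ∈ T.1) h1
      simpa using this
    cases hS : S.1 i with
    | none => rw [hmem.mp hS]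
    | some y =>
      cases hS' : S'.1 i with
      | none => exact absurd (hmem.mpr hS') (by simp [hS])
      | some y' =>
        have := congrFun h2 i
        simp [hS, hS'] at this
        rw [this]
  calc Nat.card {S : Fin n → Option (Fin k) // projDim S = ℓ}
      ≤ Nat.card ({T : Finset (Fin n) // T.card = ℓ} × (Fin n → Fin k)) :=
        Nat.card_le_card_of_injective _ hinj
    _ = n.choose ℓ * k ^ n := by
        simp [Nat.card_eq_fintype_card, Fintype.card_finset_len]

lemma card_fiber_le (S : Fin n → Option (Fin k)) :
    Nat.card {h : Fin n → Option (Fin k) // ∀ i, S i ≠ none → h i = none}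
      ≤ (k + 1) ^ projDim S := by
  have hinj : Function.Injective
      (fun h : {h : Fin n → Option (Fin k) // ∀ i, S i ≠ none → h i = none} =>
        (fun i : {i : Fin n // S i = none} => h.1 i.1)) := by
    intro h h' he
    apply Subtype.ext; funext i
    by_cases hi : S i = none
    · exact congrFun he ⟨i, hi⟩
    · rw [h.2 i hi, h'.2 i hi]
  calc Nat.card {h : Fin n → Option (Fin k) // ∀ i, S i ≠ none → h i = none}
      ≤ Nat.card ({i : Fin n // S i = none} → Option (Fin k)) :=
        Nat.card_le_card_of_injective _ hinj
    _ = (k + 1) ^ projDim S := by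
        simp [Nat.card_eq_fintype_card, Fintype.card_fun, Fintype.card_subtype, projDim]

lemma card_sym2_le (α : Type*) [Finite α] : Nat.card (Sym2 α) ≤ Nat.card α * Nat.card α := by
  have hs : Function.Surjective (fun p : α × α => s(p.1, p.2)) := by
    intro q; induction q with | _ a b => exact ⟨(a, b), rfl⟩
  calc Nat.card (Sym2 α) ≤ Nat.card (α × α) := Nat.card_le_card_of_surjective _ hs
  _ = _ := Nat.card_prod α α

lemma candCountIn_le (hk : 2 ≤ k) (SH : Fin n → Option (Fin k)) (t : ℕ) (q : ℕ × ℕ × ℕ × ℕ) :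
    candCountIn n k SH t q ≤ n.choose q.1 * k ^ n * ((k + 1) ^ q.1 * (k + 1) ^ q.1) := by
  classical
  set ℓ := q.1 with hℓ
  let Fib : {S : Fin n → Option (Fin k) // projDim S = ℓ} → Type _ :=
    fun S => Sym2 {h : Fin n → Option (Fin k) // ∀ i, S.1 i ≠ none → h i = none}
  let m : (S : Fin n → Option (Fin k)) → (Fin n → Option (Fin k)) →
      {h : Fin n → Option (Fin k) // ∀ i, S i ≠ none → h i = none} :=
    fun S a => ⟨maskP S a, fun i hi => by simp [maskP, hi]⟩
  have key : candCountIn n k SH t q ≤ Nat.card (Sigma Fib) := by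
    apply Nat.card_le_card_of_injective
      (fun c => (⟨⟨c.1.1, c.2.2.2.2.2.1⟩, Sym2.map (m c.1.1) c.1.2⟩ : Sigma Fib))
    intro c c' h
    obtain ⟨⟨S, w⟩, hP⟩ := c
    obtain ⟨⟨S', w'⟩, hP'⟩ := c'
    have hS : S = S' := congrArg (fun x : Sigma Fib => x.1.1) h
    subst hS
    simp only at h
    have hw2 : Sym2.map (m S) w = Sym2.map (m S) w' := by
      have h2 := (Sigma.mk.inj_iff.mp h).2
      exact eq_of_heq h2
    obtain ⟨-, -, -, -, hdim, -, a, b, hwab, -, -, -, hcl⟩ := hP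
    obtain ⟨-, -, -, -, hdim', -, a', b', hwab', -, -, -, hcl'⟩ := hP'
    have hsub : ∀ x y : Fin n → Option (Fin k),
        bootClosure (hamming n k) (projSet x ∪ projSet y) = projSet S →
        projSet x ⊆ projSet S ∧ projSet y ⊆ projSet S := by
      intro x y hxy
      constructor
      · rw [← hxy]
        exact (Set.subset_union_left).trans (subset_bootClosure _ _)
      · rw [← hxy]
        exact (Set.subset_union_right).trans (subset_bootClosure _ _)
    obtain ⟨hsa, hsb⟩ := hsub a b hcl
    obtain ⟨hsa', hsb'⟩ := hsub a' b' hcl'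
    replace hwab : w = s(a, b) := hwab
    replace hwab' : w' = s(a', b') := hwab'
    have hww : w = w' := by
      rw [hwab, hwab'] at hw2 ⊢
      rw [Sym2.map_pair_eq, Sym2.map_pair_eq, Sym2.eq_iff] at hw2
      have unm : ∀ x y : Fin n → Option (Fin k), projSet x ⊆ projSet S →
          projSet y ⊆ projSet S → m S x = m S y → x = y := by
        intro x y hx hy hxy
        exact unmask hk hx hy (congrArg Subtype.val hxy)
      rcases hw2 with ⟨h1, h2⟩ | ⟨h1, h2⟩
      · rw [unm a a' hsa hsa' h1, unm b b' hsb hsb' h2]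
      · rw [unm a b' hsa hsb' h1, unm b a' hsb hsa' h2, Sym2.eq_swap]
    apply Subtype.ext
    exact Prod.ext rfl hww
  refine key.trans ?_
  rw [Nat.card_eq_fintype_card, Fintype.card_sigma]
  have hB : ∀ S : {S : Fin n → Option (Fin k) // projDim S = ℓ},
      Fintype.card (Fib S) ≤ (k + 1) ^ ℓ * (k + 1) ^ ℓ := by
    intro S
    rw [← Nat.card_eq_fintype_card]
    calc Nat.card (Fib S)
        ≤ Nat.card {h : Fin n → Option (Fin k) // ∀ i, S.1 i ≠ none → h i = none} *
          Nat.card {h : Fin n → Option (Fin k) // ∀ i, S.1 i ≠ none → h i = none} :=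
          card_sym2_le _
      _ ≤ (k + 1) ^ ℓ * (k + 1) ^ ℓ := by
          have := card_fiber_le S.1
          rw [S.2] at this
          exact Nat.mul_le_mul this this
  calc ∑ S : {S : Fin n → Option (Fin k) // projDim S = ℓ}, Fintype.card (Fib S)
      ≤ ∑ _S : {S : Fin n → Option (Fin k) // projDim S = ℓ}, (k + 1) ^ ℓ * (k + 1) ^ ℓ :=
        Finset.sum_le_sum (fun S _ => hB S)
    _ = Fintype.card {S : Fin n → Option (Fin k) // projDim S = ℓ} *
        ((k + 1) ^ ℓ * (k + 1) ^ ℓ) := by simp [Finset.sum_const, mul_comm]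
    _ ≤ n.choose ℓ * k ^ n * ((k + 1) ^ ℓ * (k + 1) ^ ℓ) := by
        have := card_dim_le (n := n) hk ℓ
        rw [Nat.card_eq_fintype_card] at this
        exact Nat.mul_le_mul_right _ this

lemma Psi_nonneg (n k m : ℕ) : 0 ≤ Psi n k m := by
  induction m with
  | zero => norm_num [Psi]
  | succ m ih =>
    rw [Psi]
    split
    · positivity
    · have h1 : (0:ℝ) ≤ 1 + (k : ℝ) ^ (-(((m : ℝ) + 1) - 11) / 2) := by positivity
      have h2 : (0:ℝ) ≤ 1 + 4 / (n : ℝ) := by positivity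
      exact mul_nonneg (mul_nonneg ih h1) h2

lemma Psi_le (n k : ℕ) (hn : 1 ≤ n) (hk : 2 ≤ k) (m : ℕ) : Psi n k m ≤ 10 ^ m := by
  have hs2 : Real.sqrt 2 ≤ 2 := by
    nlinarith [Real.sq_sqrt (by norm_num : (0:ℝ) ≤ 2), Real.sqrt_nonneg 2]
  have hk1 : (1:ℝ) ≤ (k:ℝ) := by exact_mod_cast hk.trans' (by norm_num)
  have hn1 : (1:ℝ) ≤ (n:ℝ) := by exact_mod_cast hn
  induction m with
  | zero => norm_num [Psi]
  | succ m ih =>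
    rw [Psi]
    split
    · have hb : (0:ℝ) ≤ 9 * Real.sqrt 2 / 10 := by positivity
      have : (9 * Real.sqrt 2 / 10) ^ (m+1) ≤ (10:ℝ) ^ (m+1) := by
        apply pow_le_pow_left₀ hb
        nlinarith
      nlinarith [pow_nonneg hb (m+1)]
    · rename_i hm
      push_neg at hm
      have hx : (k : ℝ) ^ (-(((m : ℝ) + 1) - 11) / 2) ≤ 1 := by
        apply Real.rpow_le_one_of_one_le_of_nonpos hk1
        have : (14:ℝ) < (m:ℝ) + 1 := by exact_mod_cast hm
        nlinarith
      have h2 : 1 + (k : ℝ) ^ (-(((m : ℝ) + 1) - 11) / 2) ≤ 2 := by linarith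
      have h5 : 1 + 4 / (n : ℝ) ≤ 5 := by
        have : 4 / (n:ℝ) ≤ 4 := by
          rw [div_le_iff₀ (by linarith)]; nlinarith
        linarith
      have hpsi := Psi_nonneg n k m
      calc Psi n k m * (1 + (k : ℝ) ^ (-(((m : ℝ) + 1) - 11) / 2)) * (1 + 4 / (n : ℝ))
          ≤ (10:ℝ)^m * 2 * 5 := by
            apply mul_le_mul _ h5 (by positivity) (by positivity)
            apply mul_le_mul ih h2 (by positivity) (by positivity)
        _ ≤ 10 ^ (m+1) := by rw [pow_succ]; nlinarith [pow_nonneg (by norm_num : (0:ℝ) ≤ 10) m]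

lemma Phi_nonneg (n k : ℕ) (p : ℝ) (m : ℕ) (hk : 1 ≤ k) (hp : 0 ≤ p) : 0 ≤ Phi n k p m := by
  have h1 : (0:ℝ) ≤ (k:ℝ) - 1 := by
    have : (1:ℝ) ≤ (k:ℝ) := by exact_mod_cast hk
    linarith
  have := Psi_nonneg n k m
  unfold Phi
  positivity

lemma Phi_le (n k : ℕ) (p : ℝ) (m : ℕ) (hn : 1 ≤ n) (hk : 2 ≤ k) (hp : 0 < p)
    (hps : p ≤ pStar n k) (hm : m ≤ n) :
    Phi n k p m ≤ (10:ℝ) ^ m * (k:ℝ) ^ ((1 - 2*Real.sqrt n) * ((m:ℝ)/2 + 1)) * (n:ℝ) ^ m * 1 *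
      (k:ℝ) ^ m * (k : ℝ) ^ (((m : ℝ) ^ 2 + 2 * (m : ℝ)) / 4) := by
  have hk0 : (0:ℝ) < (k:ℝ) := by positivity
  have hk1 : (1:ℝ) ≤ (k:ℝ) := by exact_mod_cast hk.trans' (by norm_num)
  have hn1 : (1:ℝ) ≤ (n:ℝ) := by exact_mod_cast hn
  have he : (0:ℝ) ≤ (m:ℝ)/2 + 1 := by positivity
  have h2 : p ^ ((m:ℝ)/2 + 1) ≤ (k:ℝ) ^ ((1 - 2*Real.sqrt n) * ((m:ℝ)/2 + 1)) := by
    calc p ^ ((m:ℝ)/2 + 1) ≤ (pStar n k) ^ ((m:ℝ)/2 + 1) :=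
          Real.rpow_le_rpow hp.le hps he
      _ = ((n:ℝ) ^ (-2:ℝ)) ^ ((m:ℝ)/2 + 1) * ((k:ℝ) ^ (-2 * Real.sqrt n + 1)) ^ ((m:ℝ)/2 + 1) := by
          rw [pStar, Real.mul_rpow (by positivity) (by positivity)]
      _ ≤ 1 * ((k:ℝ) ^ (-2 * Real.sqrt n + 1)) ^ ((m:ℝ)/2 + 1) := by
          apply mul_le_mul_of_nonneg_right _ (by positivity)
          rw [← Real.rpow_mul (by positivity)]
          apply Real.rpow_le_one_of_one_le_of_nonpos hn1
          nlinarith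
      _ = (k:ℝ) ^ ((1 - 2*Real.sqrt n) * ((m:ℝ)/2 + 1)) := by
          rw [one_mul, ← Real.rpow_mul (by positivity)]
          ring_nf
  have h3 : ((Nat.factorial m : ℕ) : ℝ) ≤ (n:ℝ) ^ m := by
    have := (Nat.factorial_le_pow m).trans (Nat.pow_le_pow_left hm m)
    exact_mod_cast this
  have h4 : (2:ℝ) ^ (-(m:ℝ)/2) ≤ 1 := by
    have hm0 : -(m:ℝ)/2 ≤ 0 := by
      have : (0:ℝ) ≤ (m:ℝ) := Nat.cast_nonneg m
      linarith
    exact Real.rpow_le_one_of_one_le_of_nonpos (by norm_num) hm0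
  have h5 : ((k:ℝ) - 1) ^ m ≤ (k:ℝ) ^ m := by
    apply pow_le_pow_left₀ (by linarith : (0:ℝ) ≤ (k:ℝ) - 1) (by linarith)
  unfold Phi
  have hPsi := Psi_le n k hn hk m
  have hPsi0 := Psi_nonneg n k m
  have hx1 : 0 ≤ ((k:ℝ) - 1) ^ m := pow_nonneg (by linarith) m
  calc Psi n k m * p ^ ((m : ℝ) / 2 + 1) * (Nat.factorial m : ℝ) * (2 : ℝ) ^ (-(m : ℝ) / 2) *
        ((k : ℝ) - 1) ^ m * (k : ℝ) ^ (((m : ℝ) ^ 2 + 2 * (m : ℝ)) / 4)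
      ≤ (10:ℝ) ^ m * ((k:ℝ) ^ ((1 - 2*Real.sqrt n) * ((m:ℝ)/2 + 1))) * ((n:ℝ) ^ m) * 1 *
        ((k:ℝ) ^ m) * (k : ℝ) ^ (((m : ℝ) ^ 2 + 2 * (m : ℝ)) / 4) := by
        apply mul_le_mul_of_nonneg_right _ (by positivity)
        apply mul_le_mul _ h5 hx1 (by positivity)
        apply mul_le_mul _ h4 (by positivity) (by positivity)
        apply mul_le_mul _ h3 (by positivity) (by positivity)
        exact mul_le_mul hPsi h2 (by positivity) (by positivity)
    _ = _ := by ring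

set_option maxHeartbeats 1000000 in
lemma expBound (nr r l i j d : ℝ) (hn : nr = r^2) (hr : 450 ≤ r) (hji : j ≤ i)
    (hi : i ≤ 2*r - 3) (hd0 : 0 ≤ d) (hd : d ≤ 2) (hl : l ≤ i+j+d) (hl3 : 3*r < l) :
    nr + 2*l + 2*l + (1-2*r)*(i/2+1) + i + (i^2+2*i)/4 + (1-2*r)*(j/2+1) + j + (j^2+2*j)/4
      ≤ -nr/2 := by
  nlinarith [mul_nonneg (sub_nonneg.mpr hji) (sub_nonneg.mpr hji),
    sq_nonneg (i - j), sq_nonneg (i + j - 3*r), sq_nonneg (i + j - 4*r),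
    mul_nonneg (by linarith : (0:ℝ) ≤ 2*r - i) (by linarith : (0:ℝ) ≤ i - (i + j - 2*r)),
    mul_nonneg (by linarith : (0:ℝ) ≤ i + j - (3*r - 2)) (by linarith : (0:ℝ) ≤ 4*r - (i+j))]

set_option maxHeartbeats 1000000 in
lemma term_le (n k : ℕ) (p : ℝ) (hn : 202500 ≤ n) (hk : 2 ≤ k) (hp : 0 < p) (hps : p ≤ pStar n k)
    (ℓ i j d : ℕ) (hji : j ≤ i) (hit : i < ⌊2 * Real.sqrt n⌋₊ - 2) (hlijd : ℓ ≤ i + j + d)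
    (hd : d < 3) (hl3 : 3 * Real.sqrt n < (ℓ:ℝ)) :
    (candCount n k (⌊2 * Real.sqrt n⌋₊ - 2) (ℓ, i, j, d) : ℝ) * Phi n k p i * Phi n k p j
      ≤ (n:ℝ) ^ ((13:ℝ) * Real.sqrt n) * (2:ℝ) ^ (-(n:ℝ)/2) := by
  set r := Real.sqrt n with hrdef
  have hr0 : 0 ≤ r := Real.sqrt_nonneg _
  have hrn : r ^ 2 = (n:ℝ) := Real.sq_sqrt (by positivity)
  have hr450 : (450:ℝ) ≤ r := by
    rw [hrdef, show (450:ℝ) = Real.sqrt (450^2) from (Real.sqrt_sq (by norm_num)).symm]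
    apply Real.sqrt_le_sqrt
    norm_num
    exact_mod_cast hn
  have hn1 : (1:ℝ) ≤ (n:ℝ) := by
    have : (1:ℕ) ≤ n := by omega
    exact_mod_cast this
  have hk0 : (0:ℝ) < (k:ℝ) := by positivity
  have hn10 : (10:ℝ) ≤ (n:ℝ) := by
    have : (10:ℕ) ≤ n := by omega
    exact_mod_cast this
  have hk2 : (2:ℝ) ≤ (k:ℝ) := by exact_mod_cast hk
  have hi3 : (i:ℝ) + 3 ≤ 2 * r := by
    have h1 : i + 3 ≤ ⌊2 * r⌋₊ := by omega
    have h2 : ((⌊2 * r⌋₊ : ℕ) : ℝ) ≤ 2 * r := Nat.floor_le (by positivity)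
    have : ((i + 3 : ℕ) : ℝ) ≤ ((⌊2 * r⌋₊ : ℕ) : ℝ) := by exact_mod_cast h1
    push_cast at this
    linarith
  have hji' : (j:ℝ) ≤ (i:ℝ) := by exact_mod_cast hji
  have hd' : (d:ℝ) ≤ 2 := by exact_mod_cast (by omega : d ≤ 2)
  have hlijd' : (ℓ:ℝ) ≤ (i:ℝ) + (j:ℝ) + (d:ℝ) := by exact_mod_cast hlijd
  have hj0 : (0:ℝ) ≤ (j:ℝ) := Nat.cast_nonneg _
  have hd0 : (0:ℝ) ≤ (d:ℝ) := Nat.cast_nonneg _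
  -- nat bounds i, j, ℓ ≤ n
  have hi_n : i ≤ n := by
    have : (i:ℝ) ≤ (n:ℝ) := by nlinarith
    exact_mod_cast this
  have hj_n : j ≤ n := hji.trans hi_n
  -- candCount bound
  have hcand : (candCount n k (⌊2 * Real.sqrt n⌋₊ - 2) (ℓ, i, j, d) : ℝ)
      ≤ (n:ℝ)^ℓ * (k:ℝ)^(n:ℕ) * ((k:ℝ)^(2*ℓ) * (k:ℝ)^(2*ℓ)) := by
    have h1 : candCount n k (⌊2 * Real.sqrt n⌋₊ - 2) (ℓ, i, j, d)
        ≤ n.choose ℓ * k ^ n * ((k + 1) ^ ℓ * (k + 1) ^ ℓ) :=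
      candCountIn_le hk _ _ _
    have h2 : (k + 1) ^ ℓ ≤ k ^ (2*ℓ) := by
      calc (k + 1) ^ ℓ ≤ (k^2) ^ ℓ := Nat.pow_le_pow_left (by nlinarith) ℓ
      _ = k ^ (2*ℓ) := by rw [← pow_mul, mul_comm]
    have h3 : candCount n k (⌊2 * Real.sqrt n⌋₊ - 2) (ℓ, i, j, d)
        ≤ n.choose ℓ * k ^ n * (k ^ (2*ℓ) * k ^ (2*ℓ)) :=
      h1.trans (Nat.mul_le_mul_left _ (Nat.mul_le_mul h2 h2))
    have h4 : ((n.choose ℓ : ℕ) : ℝ) ≤ (n:ℝ)^ℓ := by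
      calc ((n.choose ℓ : ℕ) : ℝ) ≤ (n:ℝ)^ℓ / (Nat.factorial ℓ : ℝ) := Nat.choose_le_pow_div ℓ n
      _ ≤ (n:ℝ)^ℓ := by
          apply _root_.div_le_self (by positivity)
          exact_mod_cast Nat.one_le_iff_ne_zero.mpr (Nat.factorial_ne_zero ℓ)
    calc (candCount n k (⌊2 * Real.sqrt n⌋₊ - 2) (ℓ, i, j, d) : ℝ)
        ≤ ((n.choose ℓ : ℕ) : ℝ) * (k:ℝ)^(n:ℕ) * ((k:ℝ)^(2*ℓ) * (k:ℝ)^(2*ℓ)) := by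
          exact_mod_cast Nat.cast_le.mpr h3
      _ ≤ (n:ℝ)^ℓ * (k:ℝ)^(n:ℕ) * ((k:ℝ)^(2*ℓ) * (k:ℝ)^(2*ℓ)) := by
          apply mul_le_mul_of_nonneg_right _ (by positivity)
          exact mul_le_mul_of_nonneg_right h4 (by positivity)
  have hPhii := Phi_le n k p i (by omega) hk hp hps hi_n
  have hPhij := Phi_le n k p j (by omega) hk hp hps hj_n
  have hPhii0 := Phi_nonneg n k p i (by omega) hp.le
  have hPhij0 := Phi_nonneg n k p j (by omega) hp.le
  -- first big bound
  have step1 : (candCount n k (⌊2 * Real.sqrt n⌋₊ - 2) (ℓ, i, j, d) : ℝ) *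
      Phi n k p i * Phi n k p j ≤
      ((n:ℝ)^ℓ * (k:ℝ)^(n:ℕ) * ((k:ℝ)^(2*ℓ) * (k:ℝ)^(2*ℓ))) *
      ((10:ℝ) ^ i * (k:ℝ) ^ ((1 - 2*r) * ((i:ℝ)/2 + 1)) * (n:ℝ) ^ i * 1 *
        (k:ℝ) ^ i * (k : ℝ) ^ (((i : ℝ) ^ 2 + 2 * (i : ℝ)) / 4)) *
      ((10:ℝ) ^ j * (k:ℝ) ^ ((1 - 2*r) * ((j:ℝ)/2 + 1)) * (n:ℝ) ^ j * 1 *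
        (k:ℝ) ^ j * (k : ℝ) ^ (((j : ℝ) ^ 2 + 2 * (j : ℝ)) / 4)) := by
    apply mul_le_mul _ hPhij hPhij0 (by positivity)
    exact mul_le_mul hcand hPhii hPhii0 (by positivity)
  -- collect exponents
  set E : ℝ := ((n:ℕ):ℝ) + ((2*ℓ:ℕ):ℝ) + ((2*ℓ:ℕ):ℝ) + (1 - 2*r) * ((i:ℝ)/2 + 1) + ((i:ℕ):ℝ) +
    (((i:ℝ)^2 + 2*(i:ℝ))/4) + (1 - 2*r) * ((j:ℝ)/2 + 1) + ((j:ℕ):ℝ) +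
    (((j:ℝ)^2 + 2*(j:ℝ))/4) with hEdef
  have hcollect : ((n:ℝ)^ℓ * (k:ℝ)^(n:ℕ) * ((k:ℝ)^(2*ℓ) * (k:ℝ)^(2*ℓ))) *
      ((10:ℝ) ^ i * (k:ℝ) ^ ((1 - 2*r) * ((i:ℝ)/2 + 1)) * (n:ℝ) ^ i * 1 *
        (k:ℝ) ^ i * (k : ℝ) ^ (((i : ℝ) ^ 2 + 2 * (i : ℝ)) / 4)) *
      ((10:ℝ) ^ j * (k:ℝ) ^ ((1 - 2*r) * ((j:ℝ)/2 + 1)) * (n:ℝ) ^ j * 1 *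
        (k:ℝ) ^ j * (k : ℝ) ^ (((j : ℝ) ^ 2 + 2 * (j : ℝ)) / 4)) =
      ((n:ℝ)^ℓ * ((10:ℝ)^i * (n:ℝ)^i) * ((10:ℝ)^j * (n:ℝ)^j)) * (k:ℝ)^E := by
    rw [hEdef]
    rw [Real.rpow_add hk0, Real.rpow_add hk0, Real.rpow_add hk0, Real.rpow_add hk0,
      Real.rpow_add hk0, Real.rpow_add hk0, Real.rpow_add hk0, Real.rpow_add hk0]
    rw [Real.rpow_natCast, Real.rpow_natCast, Real.rpow_natCast, Real.rpow_natCast]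
    ring
  -- exponent bound
  have hE : E ≤ -(n:ℝ)/2 := by
    rw [hEdef]
    push_cast
    exact expBound (n:ℝ) r ℓ i j d hrn.symm hr450 hji' (by linarith) hd0 hd' hlijd' hl3
  have hkE : (k:ℝ)^E ≤ (2:ℝ)^(-(n:ℝ)/2) := by
    calc (k:ℝ)^E ≤ (2:ℝ)^E := by
          apply Real.rpow_le_rpow_of_nonpos (by norm_num) hk2
          have h0 : -(n:ℝ)/2 ≤ 0 :=
            div_nonpos_of_nonpos_of_nonneg (neg_nonpos.mpr (Nat.cast_nonneg n)) (by norm_num)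
          exact hE.trans h0
      _ ≤ (2:ℝ)^(-(n:ℝ)/2) := Real.rpow_le_rpow_of_exponent_le (by norm_num) hE
  have hN : (n:ℝ)^ℓ * ((10:ℝ)^i * (n:ℝ)^i) * ((10:ℝ)^j * (n:ℝ)^j) ≤ (n:ℝ)^((13:ℝ)*r) := by
    have h10i : (10:ℝ)^i ≤ (n:ℝ)^i := pow_le_pow_left₀ (by norm_num) (by linarith [hn10]) i
    have h10j : (10:ℝ)^j ≤ (n:ℝ)^j := pow_le_pow_left₀ (by norm_num) (by linarith [hn10]) j
    calc (n:ℝ)^ℓ * ((10:ℝ)^i * (n:ℝ)^i) * ((10:ℝ)^j * (n:ℝ)^j)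
        ≤ (n:ℝ)^ℓ * ((n:ℝ)^i * (n:ℝ)^i) * ((n:ℝ)^j * (n:ℝ)^j) := by
          apply mul_le_mul _ (mul_le_mul_of_nonneg_right h10j (by positivity)) (by positivity)
            (by positivity)
          exact mul_le_mul_of_nonneg_left (mul_le_mul_of_nonneg_right h10i (by positivity))
            (by positivity)
      _ = (n:ℝ)^(ℓ + 2*i + 2*j : ℕ) := by rw [← pow_add, ← pow_add, ← pow_add, ← pow_add]; ring_nf
      _ = (n:ℝ)^(((ℓ + 2*i + 2*j : ℕ)):ℝ) := (Real.rpow_natCast _ _).symm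
      _ ≤ (n:ℝ)^((13:ℝ)*r) := by
          apply Real.rpow_le_rpow_of_exponent_le hn1
          push_cast
          linarith
  calc (candCount n k (⌊2 * Real.sqrt n⌋₊ - 2) (ℓ, i, j, d) : ℝ) * Phi n k p i * Phi n k p j
      ≤ ((n:ℝ)^ℓ * ((10:ℝ)^i * (n:ℝ)^i) * ((10:ℝ)^j * (n:ℝ)^j)) * (k:ℝ)^E := by
        rw [← hcollect]; exact step1
    _ ≤ (n:ℝ) ^ ((13:ℝ) * r) * (2:ℝ) ^ (-(n:ℝ)/2) :=
        mul_le_mul hN hkE (by positivity) (by positivity)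

lemma loglem {x : ℝ} (hx : 1 ≤ x) : Real.log x ≤ 16 * x ^ ((1:ℝ)/16) := by
  have hx0 : (0:ℝ) < x := by linarith
  have h1 : Real.log (x ^ ((1:ℝ)/16)) = (1/16) * Real.log x := Real.log_rpow hx0 _
  have h2 : Real.log (x ^ ((1:ℝ)/16)) ≤ x ^ ((1:ℝ)/16) - 1 :=
    Real.log_le_sub_one_of_pos (by positivity)
  nlinarith [Real.rpow_nonneg hx0.le ((1:ℝ)/16)]

set_option maxHeartbeats 1000000 in
lemma tail_small (ε : ℝ) (hε : 0 < ε) (n : ℕ)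
    (hn1 : 2240^4 ≤ n) (hn2 : (⌈(-5:ℝ) * Real.log ε⌉₊ + 1) ≤ n) :
    (n:ℝ) ^ ((14:ℝ) * Real.sqrt n) * (2:ℝ) ^ (-(n:ℝ)/2) ≤ ε := by
  have hnn : 1 ≤ n := by nlinarith [hn1]
  have hn0 : (0:ℝ) < (n:ℝ) := by exact_mod_cast Nat.pos_of_ne_zero (by omega)
  have hn1' : (1:ℝ) ≤ (n:ℝ) := by exact_mod_cast hnn
  have hnc : ((2240:ℝ))^(4:ℕ) ≤ (n:ℝ) := by exact_mod_cast hn1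
  set r := Real.sqrt (n:ℝ) with hrdef
  have hr0 : 0 ≤ r := Real.sqrt_nonneg _
  have hq : (2240:ℝ) ≤ (n:ℝ) ^ ((1:ℝ)/4) := by
    have h1 : ((2240:ℝ)^(4:ℕ)) ^ ((1:ℝ)/4) ≤ (n:ℝ) ^ ((1:ℝ)/4) :=
      Real.rpow_le_rpow (by positivity) hnc (by norm_num)
    calc (2240:ℝ) = ((2240:ℝ)^(4:ℕ)) ^ ((1:ℝ)/4) := by
          rw [← Real.rpow_natCast (2240:ℝ) 4, ← Real.rpow_mul (by norm_num)]
          norm_num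
      _ ≤ _ := h1
  have hsplit : (n:ℝ) ^ ((3:ℝ)/4) * (n:ℝ) ^ ((1:ℝ)/4) = (n:ℝ) := by
    rw [← Real.rpow_add hn0]
    norm_num
  have h34 : 224 * (n:ℝ) ^ ((3:ℝ)/4) ≤ (1/10 : ℝ) * (n:ℝ) := by
    nlinarith [Real.rpow_nonneg hn0.le ((3:ℝ)/4)]
  have hlog : Real.log (n:ℝ) ≤ 16 * (n:ℝ) ^ ((1:ℝ)/16) := loglem hn1'
  have hr : r = (n:ℝ) ^ ((1:ℝ)/2) := by rw [hrdef, Real.sqrt_eq_rpow]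
  have h916 : (n:ℝ) ^ ((1:ℝ)/2) * (n:ℝ) ^ ((1:ℝ)/16) = (n:ℝ) ^ ((9:ℝ)/16) := by
    rw [← Real.rpow_add hn0]; norm_num
  have h9to34 : (n:ℝ) ^ ((9:ℝ)/16) ≤ (n:ℝ) ^ ((3:ℝ)/4) :=
    Real.rpow_le_rpow_of_exponent_le hn1' (by norm_num)
  have hmain : 14 * r * Real.log (n:ℝ) - (n:ℝ)/2 * Real.log 2 ≤ Real.log ε := by
    have hL2 : (0.6931471803:ℝ) < Real.log 2 := Real.log_two_gt_d9
    have hlogn0 : 0 ≤ Real.log (n:ℝ) := Real.log_nonneg hn1'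
    have step : 14 * r * Real.log (n:ℝ) ≤ 224 * (n:ℝ) ^ ((9:ℝ)/16) := by
      rw [hr]
      calc 14 * (n:ℝ) ^ ((1:ℝ)/2) * Real.log (n:ℝ)
          ≤ 14 * (n:ℝ) ^ ((1:ℝ)/2) * (16 * (n:ℝ) ^ ((1:ℝ)/16)) := by
            apply mul_le_mul_of_nonneg_left hlog (by positivity)
        _ = 224 * ((n:ℝ) ^ ((1:ℝ)/2) * (n:ℝ) ^ ((1:ℝ)/16)) := by ring
        _ = 224 * (n:ℝ) ^ ((9:ℝ)/16) := by rw [h916]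
    have hNe : -5 * Real.log ε ≤ (n:ℝ) := by
      have h1 : ((⌈(-5:ℝ) * Real.log ε⌉₊ : ℕ) : ℝ) ≤ (n:ℝ) := by
        exact_mod_cast (by omega : ⌈(-5:ℝ) * Real.log ε⌉₊ ≤ n)
      exact (Nat.le_ceil _).trans h1
    nlinarith [step, h9to34, h34]
  calc (n:ℝ) ^ ((14:ℝ) * r) * (2:ℝ) ^ (-(n:ℝ)/2)
      = Real.exp (14 * r * Real.log (n:ℝ) - (n:ℝ)/2 * Real.log 2) := by
        rw [Real.rpow_def_of_pos hn0, Real.rpow_def_of_pos (by norm_num : (0:ℝ) < 2),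
          ← Real.exp_add]
        ring_nf
    _ ≤ Real.exp (Real.log ε) := Real.exp_le_exp.mpr hmain
    _ = ε := Real.exp_log hε

set_option maxHeartbeats 2000000 in
theorem stmt11 :
    ∀ ε : ℝ, 0 < ε → ∃ N : ℕ, ∀ n : ℕ, N ≤ n → ∀ k : ℕ, 2 ≤ k →
      (k : ℝ) ≤ (2 : ℝ) ^ Real.sqrt n → ∀ p : ℝ, 0 < p → p ≤ pStar n k →
        |∑ q ∈ (indexSet n (⌊2 * Real.sqrt n⌋₊ - 2)).filter
            (fun q => 3 * Real.sqrt n < (q.1 : ℝ)),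
          (candCount n k (⌊2 * Real.sqrt n⌋₊ - 2) q : ℝ) *
            Phi n k p q.2.1 * Phi n k p q.2.2.1| ≤ ε := by
  intro ε hε
  refine ⟨max (2240^4) (⌈(-5:ℝ) * Real.log ε⌉₊ + 1), ?_⟩
  intro n hN k hk hk2n p hp hps
  have hn1 : 2240^4 ≤ n := le_trans (le_max_left _ _) hN
  have hn2 : (⌈(-5:ℝ) * Real.log ε⌉₊ + 1) ≤ n := le_trans (le_max_right _ _) hN
  have hn202500 : 202500 ≤ n := by nlinarith [hn1]
  have hn1' : (1:ℝ) ≤ (n:ℝ) := by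
    have : 1 ≤ n := by omega
    exact_mod_cast this
  have hk1 : 1 ≤ k := by omega
  set r := Real.sqrt (n:ℝ) with hrdef
  set t := ⌊2 * r⌋₊ - 2 with htdef
  set F := (indexSet n t).filter (fun q => 3 * r < (q.1 : ℝ)) with hFdef
  set B : ℝ := (n:ℝ) ^ ((13:ℝ) * r) * (2:ℝ) ^ (-(n:ℝ)/2) with hBdef
  have hB0 : 0 ≤ B := by rw [hBdef]; positivity
  -- per-term bound
  have hterm : ∀ q ∈ F, |(candCount n k t q : ℝ) * Phi n k p q.2.1 * Phi n k p q.2.2.1| ≤ B := by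
    intro q hq
    obtain ⟨ℓ, i, j, d⟩ := q
    rw [hFdef, Finset.mem_filter] at hq
    obtain ⟨hq1, hl3⟩ := hq
    rw [indexSet, Finset.mem_filter] at hq1
    obtain ⟨hqprod, hcond⟩ := hq1
    simp only [Finset.mem_product, Finset.mem_range] at hqprod
    obtain ⟨-, -, -, hd3⟩ := hqprod
    obtain ⟨-, hlmin, hji, hit, -⟩ := hcond
    simp only at hlmin hji hit hd3 hl3
    have hlijd : ℓ ≤ i + j + d := (le_min_iff.mp hlmin).1
    have h0 : 0 ≤ (candCount n k t (ℓ, i, j, d) : ℝ) * Phi n k p i * Phi n k p j :=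
      mul_nonneg (mul_nonneg (Nat.cast_nonneg _) (Phi_nonneg n k p i hk1 hp.le))
        (Phi_nonneg n k p j hk1 hp.le)
    rw [abs_of_nonneg h0]
    exact term_le n k p hn202500 hk hp hps ℓ i j d hji hit hlijd hd3 hl3
  -- sum bound
  have hsum : |∑ q ∈ F, (candCount n k t q : ℝ) * Phi n k p q.2.1 * Phi n k p q.2.2.1|
      ≤ (F.card : ℝ) * B := by
    calc |∑ q ∈ F, (candCount n k t q : ℝ) * Phi n k p q.2.1 * Phi n k p q.2.2.1|
        ≤ ∑ q ∈ F, |(candCount n k t q : ℝ) * Phi n k p q.2.1 * Phi n k p q.2.2.1| :=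
          Finset.abs_sum_le_sum_abs _ _
      _ ≤ F.card • B := Finset.sum_le_card_nsmul _ _ _ hterm
      _ = (F.card : ℝ) * B := nsmul_eq_mul _ _
  have hcard : F.card ≤ (n+1) * ((n+1) * ((n+1) * 3)) := by
    calc F.card ≤ (indexSet n t).card := Finset.card_filter_le _ _
      _ ≤ ((Finset.range (n + 1)) ×ˢ (Finset.range (n + 1)) ×ˢ (Finset.range (n + 1)) ×ˢ
            (Finset.range 3)).card := Finset.card_filter_le _ _
      _ = (n+1) * ((n+1) * ((n+1) * 3)) := by
          simp [Finset.card_product, Finset.card_range]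
  have hcardR : (F.card : ℝ) ≤ (n:ℝ)^(5:ℕ) := by
    have h1 : ((F.card : ℕ) : ℝ) ≤ (((n+1) * ((n+1) * ((n+1) * 3)) : ℕ) : ℝ) := by
      exact_mod_cast hcard
    refine h1.trans ?_
    push_cast
    have hnR : (202500:ℝ) ≤ (n:ℝ) := by exact_mod_cast hn202500
    have h2 : ((n:ℝ)+1)*(((n:ℝ)+1)*(((n:ℝ)+1)*3)) = 3*((n:ℝ)+1)^3 := by ring
    have h3 : ((n:ℝ)+1)^3 ≤ (2*(n:ℝ))^3 := pow_le_pow_left₀ (by linarith) (by linarith) 3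
    have hsq : (24:ℝ) ≤ (n:ℝ)^2 := by nlinarith
    have h4 : 24*(n:ℝ)^3 ≤ (n:ℝ)^5 := by
      nlinarith [mul_nonneg (sub_nonneg.mpr hsq) (pow_nonneg (by positivity : (0:ℝ) ≤ (n:ℝ)) 3)]
    nlinarith [pow_nonneg (by positivity : (0:ℝ) ≤ (n:ℝ)) 3]
  have hr5 : (5:ℝ) ≤ r := by
    rw [hrdef, show (5:ℝ) = Real.sqrt 25 from (by
      rw [show (25:ℝ) = 5^2 by norm_num, Real.sqrt_sq (by norm_num)])]
    apply Real.sqrt_le_sqrt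
    have : (25:ℕ) ≤ n := by omega
    exact_mod_cast this
  have hfinal : (n:ℝ)^(5:ℕ) * B ≤ ε := by
    have hcollapse : (n:ℝ)^(5:ℕ) * B = (n:ℝ) ^ ((5:ℝ) + 13 * r) * (2:ℝ) ^ (-(n:ℝ)/2) := by
      rw [hBdef, show ((n:ℝ)^(5:ℕ)) = (n:ℝ)^((5:ℝ)) from by
            rw [← Real.rpow_natCast (n:ℝ) 5]; norm_num,
        Real.rpow_add (by linarith : (0:ℝ) < (n:ℝ))]
      ring
    rw [hcollapse]
    have hexp : (n:ℝ) ^ ((5:ℝ) + 13 * r) ≤ (n:ℝ) ^ ((14:ℝ) * r) := by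
      apply Real.rpow_le_rpow_of_exponent_le hn1'
      linarith
    calc (n:ℝ) ^ ((5:ℝ) + 13 * r) * (2:ℝ) ^ (-(n:ℝ)/2)
        ≤ (n:ℝ) ^ ((14:ℝ) * r) * (2:ℝ) ^ (-(n:ℝ)/2) :=
          mul_le_mul_of_nonneg_right hexp (by positivity)
      _ ≤ ε := tail_small ε hε n hn1 hn2
  calc |∑ q ∈ F, (candCount n k t q : ℝ) * Phi n k p q.2.1 * Phi n k p q.2.2.1|
      ≤ (F.card : ℝ) * B := hsum
    _ ≤ (n:ℝ)^(5:ℕ) * B := mul_le_mul_of_nonneg_right hcardR hB0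
    _ ≤ ε := hfinal
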